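/- For every bipartite quantum channel N: A'B'→AB, its conditional min-entropy is sandwiched between the two conditional min-entropies of its Choi state: S↓_∞(R_AA|R_BB)_{Φ^N} − log|A'| ≤ S_∞[A|B]_N ≤ S_∞(R_AA|R_BB)_{Φ^N} − log|A'|. -/

import Mathlib

open scoped ComplexOrder Kronecker
open Matrix

noncomputable section

/-- Square complex matrices indexed by `ι`. -/
abbrev Mat (ι : Type) : Type := Matrix ι ι ℂ

/-- A quantum state: a positive semidefinite matrix of trace one. -/
def IsState {ι : Type} [Fintype ι] (ρ : Mat ι) : Prop :=
  ρ.PosSemidef ∧ ρ.trace = 1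

/-- Max-relative entropy `D_∞(ρ‖σ) = log₂ inf {λ ≥ 0 : λ•σ − ρ ⪰ 0}` as an extended real;
it is `+∞` (`sInf ∅ = ⊤`) when no such `λ` exists. -/
def Dmax {ι : Type} [Fintype ι] (ρ σ : Mat ι) : EReal :=
  sInf {x : EReal | ∃ l : ℝ, 0 ≤ l ∧ ((l : ℂ) • σ - ρ).PosSemidef ∧
    x = ((Real.logb 2 l : ℝ) : EReal)}

/-- Partial trace over the first tensor factor. -/
def trFst {ιA ιB : Type} [Fintype ιA] (ρ : Matrix (ιA × ιB) (ιA × ιB) ℂ) : Mat ιB :=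
  Matrix.of fun i j => ∑ k : ιA, ρ (k, i) (k, j)

/-- Partial trace over the second tensor factor. -/
def trSnd {ιA ιB : Type} [Fintype ιB] (ρ : Matrix (ιA × ιB) (ιA × ιB) ℂ) : Mat ιA :=
  Matrix.of fun i j => ∑ k : ιB, ρ (i, k) (j, k)

/-- Conditional min-entropy `S_∞(A|B)_ρ := −inf over states σ on B of D_∞(ρ‖1_A⊗σ)`. -/
def condMin {ιA ιB : Type} [Fintype ιA] [DecidableEq ιA] [Fintype ιB]
    (ρ : Matrix (ιA × ιB) (ιA × ιB) ℂ) : EReal :=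
  -(⨅ σ : {σ : Mat ιB // IsState σ}, Dmax ρ ((1 : Mat ιA) ⊗ₖ σ.1))

/-- `S↓_∞(A|B)_ρ := −D_∞(ρ‖1_A⊗ρ_B)` with `ρ_B = tr_A ρ`. -/
def condMinDown {ιA ιB : Type} [Fintype ιA] [DecidableEq ιA] [Fintype ιB]
    (ρ : Matrix (ιA × ιB) (ιA × ιB) ℂ) : EReal :=
  -(Dmax ρ ((1 : Mat ιA) ⊗ₖ trFst ρ))

/-- The (unnormalized) Choi matrix of a linear map of matrices. -/
def choiMatrix {ι κ : Type} [DecidableEq ι] (L : Mat ι →ₗ[ℂ] Mat κ) :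
    Matrix (ι × κ) (ι × κ) ℂ :=
  Matrix.of fun p q => L (Matrix.single p.1 q.1 1) p.2 q.2

/-- A quantum channel: a linear map that is completely positive (positive semidefinite Choi
matrix) and trace preserving. -/
def IsChannel {ι κ : Type} [Fintype ι] [DecidableEq ι] [Fintype κ]
    (L : Mat ι →ₗ[ℂ] Mat κ) : Prop :=
  (choiMatrix L).PosSemidef ∧ ∀ X : Mat ι, (L X).trace = X.trace

/-- The Choi state `Φ^L = (id⊗L)(Φ_d)` of a linear map of matrices. -/
def choiState {ι κ : Type} [Fintype ι] [DecidableEq ι] (L : Mat ι →ₗ[ℂ] Mat κ) :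
    Matrix (ι × κ) (ι × κ) ℂ :=
  ((Fintype.card ι : ℂ))⁻¹ • choiMatrix L

/-- The Choi state of a bipartite channel `N : A'B' → AB`, re-indexed across
the cut `R_A A : R_B B`. -/
def biChoiState {ιA' ιB' κA κB : Type} [Fintype ιA'] [DecidableEq ιA']
    [Fintype ιB'] [DecidableEq ιB'] (N : Mat (ιA' × ιB') →ₗ[ℂ] Mat (κA × κB)) :
    Matrix ((ιA' × κA) × (ιB' × κB)) ((ιA' × κA) × (ιB' × κB)) ℂ :=
  Matrix.of fun p q =>
    choiState N ((p.1.1, p.2.1), (p.1.2, p.2.2)) ((q.1.1, q.2.1), (q.1.2, q.2.2))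

/-- Conditional min-entropy of a bipartite channel:
`S_∞[A|B]_N := −inf over channels Q : B'→B of D_∞(Φ^N ‖ 1_{R_A A} ⊗ Φ^Q) − log₂|A'|`. -/
def chanCondMin {ιA' ιB' κA κB : Type}
    [Fintype ιA'] [DecidableEq ιA'] [Fintype ιB'] [DecidableEq ιB']
    [Fintype κA] [DecidableEq κA] [Fintype κB] [DecidableEq κB]
    (N : Mat (ιA' × ιB') →ₗ[ℂ] Mat (κA × κB)) : EReal :=
  (-(⨅ Q : {Q : Mat ιB' →ₗ[ℂ] Mat κB // IsChannel Q},
      Dmax (biChoiState N) ((1 : Mat (ιA' × κA)) ⊗ₖ choiState Q.1)))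
    - ((Real.logb 2 (Fintype.card ιA' : ℝ) : ℝ) : EReal)

/-- Rank-one projector `|v⟩⟨v|` associated with a vector. -/
def outer {ι : Type} (v : ι → ℂ) : Mat ι := Matrix.vecMulVec v (star v)

/-- Vectorization `vec(V) := ∑ i, e_i ⊗ V e_i` of a matrix `V : ℂ^ι → ℂ^κ`. -/
def vecRect {ι κ : Type} (V : Matrix κ ι ℂ) : ι × κ → ℂ := fun p => V p.2 p.1

/-- A maximally entangled state on `ι1 × ι2`: `|φ⟩⟨φ|` with
`|φ⟩ = (1/√d) ∑ i, e_i ⊗ f_i` for orthonormal families `e`, `f`, `d = min(|ι1|,|ι2|)`. -/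
def IsMaxEntangled {ι1 ι2 : Type} [Fintype ι1] [Fintype ι2]
    (Φ : Matrix (ι1 × ι2) (ι1 × ι2) ℂ) : Prop :=
  ∃ (e : Fin (min (Fintype.card ι1) (Fintype.card ι2)) → ι1 → ℂ)
    (f : Fin (min (Fintype.card ι1) (Fintype.card ι2)) → ι2 → ℂ),
    (∀ i j, ∑ x : ι1, (starRingEnd ℂ) (e i x) * e j x = if i = j then 1 else 0) ∧
    (∀ i j, ∑ x : ι2, (starRingEnd ℂ) (f i x) * f j x = if i = j then 1 else 0) ∧
    Φ = outer (fun p => (((Real.sqrt (min (Fintype.card ι1) (Fintype.card ι2) : ℝ))⁻¹ : ℝ) : ℂ) *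
      ∑ i, e i p.1 * f i p.2)

/-- Partial transpose over the second tensor factor. -/
def ptransposeSnd {ιA ιB : Type} (ρ : Matrix (ιA × ιB) (ιA × ιB) ℂ) :
    Matrix (ιA × ιB) (ιA × ιB) ℂ :=
  Matrix.of fun p q => ρ (p.1, q.2) (q.1, p.2)

/-- A bipartite state is PPT if its partial transpose is positive semidefinite. -/
def IsPPT {ιA ιB : Type} [Fintype ιA] [Fintype ιB]
    (ρ : Matrix (ιA × ιB) (ιA × ιB) ℂ) : Prop :=
  (ptransposeSnd ρ).PosSemidef

/-- Conjugation channel `X ↦ W X Wᴴ`. -/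
def conjMap {ι κ : Type} [Fintype ι] (W : Matrix κ ι ℂ) : Mat ι →ₗ[ℂ] Mat κ where
  toFun X := W * X * Wᴴ
  map_add' X Y := by simp [Matrix.mul_add, Matrix.add_mul]
  map_smul' c X := by simp [Matrix.mul_smul, Matrix.smul_mul]

/-- The controlled unitary matrix `∑ j, |j⟩⟨j| ⊗ U_j`. -/
def ctrlU {n m : ℕ} (U : Fin n → Mat (Fin m)) : Mat (Fin n × Fin m) :=
  Matrix.of fun p q => (if p.1 = q.1 then 1 else 0) * U p.1 p.2 q.2

/-- The replacer channel `X ↦ tr(X) • γ`. -/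
def replacer {ι κ : Type} [Fintype ι] (γ : Mat κ) : Mat ι →ₗ[ℂ] Mat κ where
  toFun X := X.trace • γ
  map_add' X Y := by simp [Matrix.trace_add, add_smul]
  map_smul' c X := by simp [Matrix.trace_smul, mul_smul]

/-- The maximally mixed state `π_m = 1_m / m`. -/
def uniformState (m : ℕ) : Mat (Fin m) := ((m : ℂ))⁻¹ • (1 : Mat (Fin m))

/-- Tensor product of two linear maps of matrices. -/
def tensorL {ι1 κ1 ι2 κ2 : Type} [Fintype ι1] [DecidableEq ι1]
    (L1 : Mat ι1 →ₗ[ℂ] Mat κ1) (L2 : Mat ι2 →ₗ[ℂ] Mat κ2) :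
    Mat (ι1 × ι2) →ₗ[ℂ] Mat (κ1 × κ2) where
  toFun X := Matrix.of fun p q =>
    ∑ i1 : ι1, ∑ j1 : ι1,
      L1 (Matrix.single i1 j1 1) p.1 q.1 *
        L2 (Matrix.of fun i2 j2 => X (i1, i2) (j1, j2)) p.2 q.2
  map_add' X Y := by
    ext p q
    have h : ∀ i1 j1 : ι1,
        (Matrix.of fun i2 j2 => X (i1, i2) (j1, j2) + Y (i1, i2) (j1, j2)) =
          (Matrix.of fun i2 j2 => X (i1, i2) (j1, j2)) +
            (Matrix.of fun i2 j2 => Y (i1, i2) (j1, j2)) := by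
      intro i1 j1; ext i2 j2; simp
    simp only [Matrix.add_apply, Matrix.of_apply, h, map_add, mul_add,
      Finset.sum_add_distrib]
  map_smul' c X := by
    ext p q
    have h : ∀ i1 j1 : ι1,
        (Matrix.of fun i2 j2 => c * X (i1, i2) (j1, j2)) =
          c • (Matrix.of fun i2 j2 => X (i1, i2) (j1, j2)) := by
      intro i1 j1; ext i2 j2; simp
    simp only [Matrix.smul_apply, smul_eq_mul, Matrix.of_apply, RingHom.id_apply, h,
      LinearMap.map_smul]
    rw [Finset.mul_sum]
    refine Finset.sum_congr rfl fun i1 _ => ?_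
    rw [Finset.mul_sum]
    refine Finset.sum_congr rfl fun j1 _ => ?_
    ring


/-- The square root of a positive semidefinite matrix, as `Matrix.PosSemidef.sqrt` was
defined in the older Mathlib (since removed). -/
def posSemidefSqrt {ι : Type} [Fintype ι] [DecidableEq ι] {M : Mat ι} (hM : M.PosSemidef) :
    Mat ι :=
  hM.1.eigenvectorUnitary.1 * diagonal ((↑) ∘ (√·) ∘ hM.1.eigenvalues) *
    (star hM.1.eigenvectorUnitary : Mat ι)

/-- Square root of a positive semidefinite matrix (junk value `0` otherwise). -/
def matSqrt {ι : Type} [Fintype ι] [DecidableEq ι] (M : Mat ι) : Mat ι :=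
  letI := Classical.dec M.PosSemidef
  if h : M.PosSemidef then posSemidefSqrt h else 0

/-- Trace norm `‖X‖₁ = tr √(XᴴX)`. -/
def traceNorm {ι : Type} [Fintype ι] [DecidableEq ι] (X : Mat ι) : ℝ :=
  (matSqrt (Xᴴ * X)).trace.re

/-- Fidelity `F(ρ,σ) = ‖√ρ√σ‖₁²`. -/
def fidelity {ι : Type} [Fintype ι] [DecidableEq ι] (ρ σ : Mat ι) : ℝ :=
  (traceNorm (matSqrt ρ * matSqrt σ)) ^ 2

/-- Purified distance `P(ρ,σ) = √(1 − F(ρ,σ))`. -/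
def purifiedDist {ι : Type} [Fintype ι] [DecidableEq ι] (ρ σ : Mat ι) : ℝ :=
  Real.sqrt (1 - fidelity ρ σ)

/-- Purified channel distance `P[N,M] = sup over states ψ of P((id⊗N)ψ, (id⊗M)ψ)`. -/
def purifiedChannelDist {ι κ : Type} [Fintype ι] [DecidableEq ι] [Fintype κ] [DecidableEq κ]
    (L1 L2 : Mat ι →ₗ[ℂ] Mat κ) : ℝ :=
  ⨆ ψ : {ψ : Matrix (ι × ι) (ι × ι) ℂ // IsState ψ},
    purifiedDist (tensorL (LinearMap.id : Mat ι →ₗ[ℂ] Mat ι) L1 ψ.1)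
      (tensorL (LinearMap.id : Mat ι →ₗ[ℂ] Mat ι) L2 ψ.1)

/-- Diamond norm `‖L‖◊ = sup over states ρ on R⊗in (R ≃ in) of ‖(id⊗L)ρ‖₁`. -/
def diamondNorm {ι κ : Type} [Fintype ι] [DecidableEq ι] [Fintype κ] [DecidableEq κ]
    (L : Mat ι →ₗ[ℂ] Mat κ) : ℝ :=
  ⨆ ρ : {ρ : Matrix (ι × ι) (ι × ι) ℂ // IsState ρ},
    traceNorm (tensorL (LinearMap.id : Mat ι →ₗ[ℂ] Mat ι) L ρ.1)

/-- `−log₂ t`, as an extended real which is `+∞` for `t ≤ 0`. -/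
def negLogE (t : ℝ) : EReal := if t ≤ 0 then ⊤ else ((-Real.logb 2 t : ℝ) : EReal)

/-- Hypothesis-testing relative entropy
`D_H^ε(ρ‖σ) = −log₂ inf{tr(Λσ) : 0 ≤ Λ ≤ 1, tr(Λρ) ≥ 1−ε}`. -/
def DH {ι : Type} [Fintype ι] [DecidableEq ι] (ε : ℝ) (ρ σ : Mat ι) : EReal :=
  negLogE (sInf {t : ℝ | ∃ Λ : Mat ι, Λ.PosSemidef ∧ ((1 : Mat ι) - Λ).PosSemidef ∧
    1 - ε ≤ ((Λ * ρ).trace).re ∧ t = ((Λ * σ).trace).re})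

/-- Channel hypothesis-testing relative entropy
`D_H^ε[N‖M] = sup over states ψ of D_H^ε((id⊗N)ψ‖(id⊗M)ψ)`. -/
def DHchan {ι κ : Type} [Fintype ι] [DecidableEq ι] [Fintype κ] [DecidableEq κ]
    (ε : ℝ) (L1 L2 : Mat ι →ₗ[ℂ] Mat κ) : EReal :=
  ⨆ ψ : {ψ : Matrix (ι × ι) (ι × ι) ℂ // IsState ψ},
    DH ε (tensorL (LinearMap.id : Mat ι →ₗ[ℂ] Mat ι) L1 ψ.1)
      (tensorL (LinearMap.id : Mat ι →ₗ[ℂ] Mat ι) L2 ψ.1)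

/-- Channel max-relative entropy `D_∞[N‖M] = D_∞(Φ^N‖Φ^M)`. -/
def DmaxChan {ι κ : Type} [Fintype ι] [DecidableEq ι] [Fintype κ]
    (L1 L2 : Mat ι →ₗ[ℂ] Mat κ) : EReal :=
  Dmax (choiState L1) (choiState L2)

/-- Smoothed channel max-relative entropy
`D_∞^ε[N‖M] = inf{D_∞[Ñ‖M] : Ñ a channel with (1/2)P[N,Ñ] ≤ ε}`. -/
def DmaxChanSmooth {ι κ : Type} [Fintype ι] [DecidableEq ι] [Fintype κ] [DecidableEq κ]
    (ε : ℝ) (L1 L2 : Mat ι →ₗ[ℂ] Mat κ) : EReal :=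
  ⨅ Nt : {Nt : Mat ι →ₗ[ℂ] Mat κ //
      IsChannel Nt ∧ 2⁻¹ * purifiedChannelDist L1 Nt ≤ ε},
    DmaxChan Nt.1 L2

/-- A quantum superchannel: `Θ(N) = post ∘ (id_E ⊗ N) ∘ pre` for channels `pre`, `post`
and a finite-dimensional memory `E`. -/
structure Superchannel (ι1 κ1 ι2 κ2 : Type) [Fintype ι1] [DecidableEq ι1]
    [Fintype κ1] [DecidableEq κ1] [Fintype ι2] [DecidableEq ι2]
    [Fintype κ2] [DecidableEq κ2] where
  e : ℕ
  pre : Mat ι2 →ₗ[ℂ] Mat (Fin e × ι1)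
  post : Mat (Fin e × κ1) →ₗ[ℂ] Mat κ2
  pre_channel : IsChannel pre
  post_channel : IsChannel post

/-- Action of a superchannel on a linear map. -/
def Superchannel.apply {ι1 κ1 ι2 κ2 : Type} [Fintype ι1] [DecidableEq ι1]
    [Fintype κ1] [DecidableEq κ1] [Fintype ι2] [DecidableEq ι2]
    [Fintype κ2] [DecidableEq κ2] (Θ : Superchannel ι1 κ1 ι2 κ2)
    (L : Mat ι1 →ₗ[ℂ] Mat κ1) : Mat ι2 →ₗ[ℂ] Mat κ2 :=
  Θ.post ∘ₗ (tensorL (LinearMap.id : Mat (Fin Θ.e) →ₗ[ℂ] Mat (Fin Θ.e)) L) ∘ₗ Θ.pre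


/-- A conditional Gibbs-preserving superchannel (distillation direction): it maps every
conditionally thermalizing channel `T^β ⊗ Q̃` to a conditionally uniformly mixing channel
`R^π_m ⊗ Q̃'` for some side channel `Q̃'`. -/
def IsCGPSdist {a' b' a b m d' d : ℕ} (γ : Mat (Fin a))
    (Θ : Superchannel (Fin a' × Fin b') (Fin a × Fin b) (Fin m × Fin d') (Fin m × Fin d)) :
    Prop :=
  ∀ Qt : Mat (Fin b') →ₗ[ℂ] Mat (Fin b), IsChannel Qt →
    ∃ Qt' : Mat (Fin d') →ₗ[ℂ] Mat (Fin d), IsChannel Qt' ∧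
      Θ.apply (tensorL (replacer γ) Qt) = tensorL (replacer (uniformState m)) Qt'

/-- A conditional Gibbs-preserving superchannel (formation direction): it maps every
conditionally uniformly mixing channel `R^π_m ⊗ Q̃` to a conditionally thermalizing channel
`T^β ⊗ Q̃'` for some side channel `Q̃'`. -/
def IsCGPScost {a' b' a b m d' d : ℕ} (γ : Mat (Fin a))
    (Θ : Superchannel (Fin m × Fin d') (Fin m × Fin d) (Fin a' × Fin b') (Fin a × Fin b)) :
    Prop :=
  ∀ Qt : Mat (Fin d') →ₗ[ℂ] Mat (Fin d), IsChannel Qt →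
    ∃ Qt' : Mat (Fin b') →ₗ[ℂ] Mat (Fin b), IsChannel Qt' ∧
      Θ.apply (tensorL (replacer (uniformState m)) Qt) = tensorL (replacer γ) Qt'

/-- One-shot conditional athermality distillation yield `Dist^{(1,ε)}(N, T^β)`:
the worst case over side channels `Q` of the largest `log₂ m` such that some conditional
Gibbs-preserving superchannel converts `(N, T^β⊗Q)` into `(id_m⊗Q', R^π_m⊗Q')`
within purified channel distance `ε`. -/
def DistOneShot {a' b' a b : ℕ} (N : Mat (Fin a' × Fin b') →ₗ[ℂ] Mat (Fin a × Fin b))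
    (γ : Mat (Fin a)) (ε : ℝ) : EReal :=
  ⨅ Q : {Q : Mat (Fin b') →ₗ[ℂ] Mat (Fin b) // IsChannel Q},
    sSup {x : EReal | ∃ m d' d : ℕ, ∃ Q' : Mat (Fin d') →ₗ[ℂ] Mat (Fin d),
      ∃ Θ : Superchannel (Fin a' × Fin b') (Fin a × Fin b) (Fin m × Fin d') (Fin m × Fin d),
        IsChannel Q' ∧ IsCGPSdist γ Θ ∧
        Θ.apply (tensorL (replacer γ) Q.1) = tensorL (replacer (uniformState m)) Q' ∧
        purifiedChannelDist
          (tensorL (LinearMap.id : Mat (Fin m) →ₗ[ℂ] Mat (Fin m)) Q') (Θ.apply N) ≤ ε ∧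
        x = ((Real.logb 2 (m : ℝ) : ℝ) : EReal)}

/-- One-shot conditional athermality formation cost `Cost^{(1,ε)}(N, T^β)`:
the best case over side channels `Q` of the least `log₂ m` such that some conditional
Gibbs-preserving superchannel converts `(id_m⊗Q'', R^π_m⊗Q'')` into `(N, T^β⊗Q)`
within purified channel distance `ε`. -/
def CostOneShot {a' b' a b : ℕ} (N : Mat (Fin a' × Fin b') →ₗ[ℂ] Mat (Fin a × Fin b))
    (γ : Mat (Fin a)) (ε : ℝ) : EReal :=
  ⨅ Q : {Q : Mat (Fin b') →ₗ[ℂ] Mat (Fin b) // IsChannel Q},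
    sInf {x : EReal | ∃ m d' d : ℕ, ∃ Q'' : Mat (Fin d') →ₗ[ℂ] Mat (Fin d),
      ∃ Θ : Superchannel (Fin m × Fin d') (Fin m × Fin d) (Fin a' × Fin b') (Fin a × Fin b),
        IsChannel Q'' ∧ IsCGPScost γ Θ ∧
        Θ.apply (tensorL (replacer (uniformState m)) Q'') = tensorL (replacer γ) Q.1 ∧
        purifiedChannelDist N
          (Θ.apply (tensorL (LinearMap.id : Mat (Fin m) →ₗ[ℂ] Mat (Fin m)) Q'')) ≤ ε ∧
        x = ((Real.logb 2 (m : ℝ) : ℝ) : EReal)}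


/-- A bipartite channel `N : A'B' → AB` is no-signaling (semicausal) from `A'` to `B`:
`tr_A ∘ N = tr_{A'} ⊗ Q` for some channel `Q : B' → B`. -/
def NoSignalFstToSnd {ιA' ιB' κA κB : Type} [Fintype ιA'] [DecidableEq ιA']
    [Fintype ιB'] [DecidableEq ιB'] [Fintype κA] [Fintype κB]
    (N : Mat (ιA' × ιB') →ₗ[ℂ] Mat (κA × κB)) : Prop :=
  ∃ Q : Mat ιB' →ₗ[ℂ] Mat κB, IsChannel Q ∧
    ∀ X : Mat (ιA' × ιB'), trFst (N X) = Q (trFst X)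

end

section MyAux
open scoped ComplexOrder

lemma aux_psd_smul {ι : Type} [Fintype ι] {M : Mat ι} (h : M.PosSemidef) {c : ℂ}
    (hc : 0 ≤ c) : (c • M).PosSemidef := by
  have hsc : star c = c := by
    rw [Complex.star_def, Complex.conj_eq_iff_im]
    exact ((Complex.nonneg_iff.mp hc).2).symm
  refine ⟨?_, fun x => ?_⟩
  · unfold Matrix.IsHermitian
    rw [Matrix.conjTranspose_smul, hsc, h.1.eq]
  · exact (h.smul hc).2 x

lemma aux_psd_sum {ι κ : Type} [Fintype ι] [Fintype κ] (f : κ → Mat ι)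
    (h : ∀ k, (f k).PosSemidef) : (∑ k, f k).PosSemidef := by
  refine ⟨?_, fun x => ?_⟩
  · unfold Matrix.IsHermitian
    rw [Matrix.conjTranspose_sum]
    exact Finset.sum_congr rfl fun k _ => (h k).1.eq
  · exact (posSemidef_sum Finset.univ fun k _ => h k).2 x

lemma aux_trFst_psd {ιA ιB : Type} [Fintype ιA] [Fintype ιB]
    {ρ : Matrix (ιA × ιB) (ιA × ιB) ℂ} (hρ : ρ.PosSemidef) : (trFst ρ).PosSemidef := by
  have h : trFst ρ = ∑ k : ιA, ρ.submatrix (fun i => (k, i)) (fun j => (k, j)) := by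
    ext i j
    simp [trFst, Matrix.sum_apply]
  rw [h]
  exact aux_psd_sum _ fun k => hρ.submatrix _

lemma aux_trace_std {ι : Type} [Fintype ι] [DecidableEq ι] (p q : ι) :
    (Matrix.single p q (1 : ℂ)).trace = if p = q then 1 else 0 := by
  by_cases h : p = q
  · subst h
    simp [Matrix.trace, Matrix.diag, Matrix.single]
  · rw [if_neg h]
    refine Finset.sum_eq_zero fun r _ => ?_
    simp only [Matrix.diag_apply, Matrix.single, Matrix.of_apply]
    rw [if_neg]
    rintro ⟨rfl, rfl⟩
    exact h rfl


lemma aux_choiState_psd {ι κ : Type} [Fintype ι] [DecidableEq ι] [Fintype κ]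
    {L : Mat ι →ₗ[ℂ] Mat κ} (hL : IsChannel L) : (choiState L).PosSemidef := by
  unfold choiState
  have hc : (0 : ℂ) ≤ ((Fintype.card ι : ℂ))⁻¹ := by
    have h : ((Fintype.card ι : ℂ))⁻¹ = Complex.ofReal ((Fintype.card ι : ℝ)⁻¹) := by
      rw [Complex.ofReal_inv, Complex.ofReal_natCast]
    rw [h, Complex.zero_le_real]
    positivity
  exact aux_psd_smul hL.1 hc

lemma aux_biChoiState_psd {ιA' ιB' κA κB : Type} [Fintype ιA'] [DecidableEq ιA']
    [Fintype ιB'] [DecidableEq ιB'] [Fintype κA] [Fintype κB]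
    {N : Mat (ιA' × ιB') →ₗ[ℂ] Mat (κA × κB)} (hN : IsChannel N) :
    (biChoiState N).PosSemidef := by
  have h2 : biChoiState N = (choiState N).submatrix
      (fun p => ((p.1.1, p.2.1), (p.1.2, p.2.2)))
      (fun p => ((p.1.1, p.2.1), (p.1.2, p.2.2))) := rfl
  rw [h2]
  exact (aux_choiState_psd hN).submatrix _

/-- The channel with prescribed Choi state `J`. -/
noncomputable def chanOfChoi {ιB' κB : Type} [Fintype ιB'] [Fintype κB]
    (J : Matrix (ιB' × κB) (ιB' × κB) ℂ) : Mat ιB' →ₗ[ℂ] Mat κB where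
  toFun X := Matrix.of fun p q =>
    (Fintype.card ιB' : ℂ) * ∑ i : ιB', ∑ j : ιB', X i j * J (i, p) (j, q)
  map_add' X Y := by
    ext p q
    simp only [Matrix.of_apply, Matrix.add_apply, add_mul, Finset.sum_add_distrib, mul_add]
  map_smul' c X := by
    ext p q
    simp only [Matrix.of_apply, Matrix.smul_apply, smul_eq_mul, RingHom.id_apply,
      Finset.mul_sum]
    refine Finset.sum_congr rfl fun i _ => ?_
    refine Finset.sum_congr rfl fun j _ => ?_
    ring

lemma aux_choiMatrix_chanOfChoi {ιB' κB : Type} [Fintype ιB'] [DecidableEq ιB'] [Fintype κB]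
    (J : Matrix (ιB' × κB) (ιB' × κB) ℂ) :
    choiMatrix (chanOfChoi J) = (Fintype.card ιB' : ℂ) • J := by
  ext p q
  simp only [choiMatrix, chanOfChoi, Matrix.of_apply, LinearMap.coe_mk, AddHom.coe_mk,
    Matrix.smul_apply, smul_eq_mul]
  congr 1
  rw [Finset.sum_eq_single p.1]
  · rw [Finset.sum_eq_single q.1]
    · simp [Matrix.single]
    · intro j _ hj
      simp [Matrix.single, Ne.symm hj]
    · intro h; exact absurd (Finset.mem_univ _) h
  · intro i _ hi
    refine Finset.sum_eq_zero fun j _ => ?_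
    simp [Matrix.single, Ne.symm hi]
  · intro h; exact absurd (Finset.mem_univ _) h

lemma aux_choiState_chanOfChoi {ιB' κB : Type} [Fintype ιB'] [DecidableEq ιB'] [Fintype κB]
    [Nonempty ιB'] (J : Matrix (ιB' × κB) (ιB' × κB) ℂ) :
    choiState (chanOfChoi J) = J := by
  rw [choiState, aux_choiMatrix_chanOfChoi, smul_smul, inv_mul_cancel₀, one_smul]
  exact_mod_cast Fintype.card_ne_zero

lemma aux_chanOfChoi_channel {ιB' κB : Type} [Fintype ιB'] [DecidableEq ιB'] [Fintype κB]
    [Nonempty ιB'] {J : Matrix (ιB' × κB) (ιB' × κB) ℂ} (hJ : J.PosSemidef)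
    (hTr : trSnd J = ((Fintype.card ιB' : ℂ))⁻¹ • (1 : Mat ιB')) :
    IsChannel (chanOfChoi J) := by
  have hcard : (Fintype.card ιB' : ℂ) ≠ 0 := by exact_mod_cast Fintype.card_ne_zero
  constructor
  · rw [aux_choiMatrix_chanOfChoi]
    exact aux_psd_smul hJ (Nat.cast_nonneg _)
  · intro X
    have key : ∀ i j : ιB', ∑ p : κB, J (i, p) (j, p)
        = ((Fintype.card ιB' : ℂ))⁻¹ * (if i = j then 1 else 0) := by
      intro i j
      have h : trSnd J i j = (((Fintype.card ιB' : ℂ))⁻¹ • (1 : Mat ιB')) i j := by rw [hTr]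
      simpa [trSnd, Matrix.one_apply] using h
    have h1 : (chanOfChoi J X).trace
        = (Fintype.card ιB' : ℂ) * ∑ i : ιB', ∑ j : ιB', X i j * ∑ p : κB, J (i, p) (j, p) := by
      simp only [Matrix.trace, Matrix.diag, chanOfChoi, LinearMap.coe_mk, AddHom.coe_mk,
        Matrix.of_apply]
      rw [← Finset.mul_sum]
      congr 1
      rw [Finset.sum_comm]
      refine Finset.sum_congr rfl fun i _ => ?_
      rw [Finset.sum_comm]
      refine Finset.sum_congr rfl fun j _ => ?_
      exact (Finset.mul_sum _ _ _).symm
    rw [h1]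
    have h3 : ∀ i : ιB', ∑ j : ιB',
        X i j * (((Fintype.card ιB' : ℂ))⁻¹ * (if i = j then 1 else 0))
        = ((Fintype.card ιB' : ℂ))⁻¹ * X i i := by
      intro i
      rw [Finset.sum_eq_single i]
      · simp [mul_comm]
      · intro j _ hj; simp [Ne.symm hj]
      · intro h; exact absurd (Finset.mem_univ _) h
    simp only [key, h3, ← Finset.mul_sum]
    rw [← mul_assoc, mul_inv_cancel₀ hcard, one_mul]
    simp [Matrix.trace, Matrix.diag]

lemma aux_choiState_isState {ι κ : Type} [Fintype ι] [DecidableEq ι] [Fintype κ] [Nonempty ι]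
    {L : Mat ι →ₗ[ℂ] Mat κ} (hL : IsChannel L) : IsState (choiState L) := by
  refine ⟨aux_choiState_psd hL, ?_⟩
  have h1 : (choiMatrix L).trace = (Fintype.card ι : ℂ) := by
    have h2 : (choiMatrix L).trace = ∑ i : ι, (L (Matrix.single i i 1)).trace := by
      rw [Matrix.trace, Fintype.sum_prod_type]
      rfl
    have h3 : ∀ i : ι, (L (Matrix.single i i (1 : ℂ))).trace = 1 := by
      intro i; rw [hL.2, aux_trace_std, if_pos rfl]
    rw [h2, Finset.sum_congr rfl fun i _ => h3 i, Finset.sum_const, Finset.card_univ,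
      nsmul_eq_mul, mul_one]
  rw [choiState, Matrix.trace_smul, h1, smul_eq_mul, inv_mul_cancel₀]
  exact_mod_cast Fintype.card_ne_zero

lemma aux_trSnd_trFst {ιA' ιB' κA κB : Type} [Fintype ιA'] [DecidableEq ιA'] [Nonempty ιA']
    [Fintype ιB'] [DecidableEq ιB'] [Nonempty ιB'] [Fintype κA] [Fintype κB]
    {N : Mat (ιA' × ιB') →ₗ[ℂ] Mat (κA × κB)} (hN : IsChannel N) :
    trSnd (trFst (biChoiState N)) = ((Fintype.card ιB' : ℂ))⁻¹ • (1 : Mat ιB') := by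
  have hA : (Fintype.card ιA' : ℂ) ≠ 0 := by exact_mod_cast Fintype.card_ne_zero
  ext i j
  have key : ∀ k1 : ιA', ∑ z : κA × κB, N (Matrix.single (k1, i) (k1, j) 1) z z
      = if i = j then 1 else 0 := by
    intro k1
    have h := hN.2 (Matrix.single (k1, i) (k1, j) 1)
    rw [aux_trace_std] at h
    simpa [Matrix.trace, Matrix.diag, Prod.mk.injEq] using h
  have lhs1 : trSnd (trFst (biChoiState N)) i j
      = ((Fintype.card (ιA' × ιB') : ℂ))⁻¹ *
        ∑ p : κB, ∑ k : ιA' × κA,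
          N (Matrix.single (k.1, i) (k.1, j) 1) (k.2, p) (k.2, p) := by
    simp only [trSnd, trFst, biChoiState, choiState, choiMatrix, Matrix.of_apply,
      Matrix.smul_apply, smul_eq_mul, ← Finset.mul_sum]
  rw [lhs1]
  have h2 : ∑ p : κB, ∑ k : ιA' × κA,
      N (Matrix.single (k.1, i) (k.1, j) 1) (k.2, p) (k.2, p)
      = ∑ k1 : ιA', ∑ z : κA × κB, N (Matrix.single (k1, i) (k1, j) 1) z z := by
    simp only [Fintype.sum_prod_type]
    rw [Finset.sum_comm]
    refine Finset.sum_congr rfl fun k1 _ => ?_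
    exact Finset.sum_comm
  have hB : (Fintype.card ιB' : ℂ) ≠ 0 := by exact_mod_cast Fintype.card_ne_zero
  rw [h2]
  simp only [key]
  rw [Finset.sum_const, Finset.card_univ, nsmul_eq_mul, Fintype.card_prod, Nat.cast_mul,
    mul_inv]
  simp only [Matrix.smul_apply, Matrix.one_apply, smul_eq_mul]
  field_simp

end MyAux

set_option maxHeartbeats 1000000 in
/-- For every bipartite quantum channel `N : A'B' → AB`, its conditional
min-entropy is sandwiched between the two conditional min-entropies of its Choi state:
`S↓_∞(R_AA|R_BB)_{Φ^N} − log|A'| ≤ S_∞[A|B]_N ≤ S_∞(R_AA|R_BB)_{Φ^N} − log|A'|`. -/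
theorem conditional_channel_min_entropy_choi_bounds
    {a' b' a b : ℕ} [NeZero a'] [NeZero b'] [NeZero a] [NeZero b]
    (N : Mat (Fin a' × Fin b') →ₗ[ℂ] Mat (Fin a × Fin b)) (hN : IsChannel N) :
    condMinDown (biChoiState N) - ((Real.logb 2 (a' : ℝ) : ℝ) : EReal) ≤ chanCondMin N ∧
    chanCondMin N ≤ condMin (biChoiState N) - ((Real.logb 2 (a' : ℝ) : ℝ) : EReal) := by
  constructor
  · -- lower bound
    have hJpsd : (trFst (biChoiState N)).PosSemidef :=
      aux_trFst_psd (aux_biChoiState_psd hN)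
    have hTr : trSnd (trFst (biChoiState N))
        = ((Fintype.card (Fin b') : ℂ))⁻¹ • (1 : Mat (Fin b')) := aux_trSnd_trFst hN
    have hch : IsChannel (chanOfChoi (trFst (biChoiState N))) :=
      aux_chanOfChoi_channel hJpsd hTr
    have hcs : choiState (chanOfChoi (trFst (biChoiState N))) = trFst (biChoiState N) :=
      aux_choiState_chanOfChoi _
    have h1 : (⨅ Q : {Q : Mat (Fin b') →ₗ[ℂ] Mat (Fin b) // IsChannel Q},
        Dmax (biChoiState N) ((1 : Mat (Fin a' × Fin a)) ⊗ₖ choiState Q.1))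
        ≤ Dmax (biChoiState N) ((1 : Mat (Fin a' × Fin a)) ⊗ₖ trFst (biChoiState N)) := by
      have h := iInf_le (fun Q : {Q : Mat (Fin b') →ₗ[ℂ] Mat (Fin b) // IsChannel Q} =>
        Dmax (biChoiState N) ((1 : Mat (Fin a' × Fin a)) ⊗ₖ choiState Q.1))
        ⟨chanOfChoi (trFst (biChoiState N)), hch⟩
      rwa [hcs] at h
    unfold chanCondMin condMinDown
    simp only [Fintype.card_fin]
    exact EReal.sub_le_sub (EReal.neg_le_neg_iff.mpr h1) le_rfl
  · -- upper bound
    have h2 : (⨅ σ : {σ : Mat (Fin b' × Fin b) // IsState σ},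
        Dmax (biChoiState N) ((1 : Mat (Fin a' × Fin a)) ⊗ₖ σ.1))
        ≤ ⨅ Q : {Q : Mat (Fin b') →ₗ[ℂ] Mat (Fin b) // IsChannel Q},
          Dmax (biChoiState N) ((1 : Mat (Fin a' × Fin a)) ⊗ₖ choiState Q.1) := by
      refine le_iInf fun Q => ?_
      exact iInf_le (fun σ : {σ : Mat (Fin b' × Fin b) // IsState σ} =>
        Dmax (biChoiState N) ((1 : Mat (Fin a' × Fin a)) ⊗ₖ σ.1))
        ⟨choiState Q.1, aux_choiState_isState Q.2⟩
    unfold chanCondMin condMin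
    simp only [Fintype.card_fin]
    exact EReal.sub_le_sub (EReal.neg_le_neg_iff.mpr h2) le_rfl
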